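/- arXiv:2007.14715 — 2 statements merged into one kernel-verified Lean document; each statement's English description precedes it below -/
import Mathlib

section
/- For every target state z in M_1^{(0),N}(Z_+), the one-step transition probability of Haigh's Muller-ratchet chain into z is bounded below uniformly over initial states: inf{ P_{z_0}( Z^N(1) = z ) : z_0 ∈ M_1^{(0),N}(Z_+) } > 0. -/
open scoped BigOperators Classical

noncomputable section

namespace MullerRatchet

/-- A population state: counts of individuals per number of deleterious mutations,
totalling `N` individuals.  This is the (count version of the) space `M_1^N(Z_+)`. -/
def State (N : ℕ) : Type := {z : ℕ →₀ ℕ // z.sum (fun _ n => n) = N}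

/-- Total selective weight `Σ_i z(i) (1-α)^i` of a population. -/
def totalWeight (N : ℕ) (α : ℝ) (z : State N) : ℝ :=
  z.1.sum fun i n => (n : ℝ) * (1 - α) ^ i

/-- Probability that one offspring chooses a parent carrying `i` mutations. -/
def parentProb (N : ℕ) (α : ℝ) (z : State N) (i : ℕ) : ℝ :=
  ((z.1 i : ℝ) * (1 - α) ^ i) / totalWeight N α z

/-- The Poisson(`lam`) probability mass function. -/
def poissonPMF (lam : ℝ) (k : ℕ) : ℝ :=
  Real.exp (-lam) * lam ^ k / (Nat.factorial k : ℝ)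

/-- Law of the number of mutations of one offspring: parent's type `i` plus an
independent Poisson(`lam`) number of new mutations. -/
def offspringProb (N : ℕ) (α lam : ℝ) (z : State N) (m : ℕ) : ℝ :=
  ∑ i ∈ Finset.range (m + 1), parentProb N α z i * poissonPMF lam (m - i)

/-- Empirical counts of the types of the `N` offspring. -/
def empCount (N : ℕ) (f : Fin N → ℕ) (m : ℕ) : ℕ :=
  (Finset.univ.filter fun n => f n = m).card

/-- One-step transition probability `P_z(Z^N(1) = y)` of Haigh's Muller-ratchet chain:
the `N` offspring choose their types independently according to `offspringProb`. -/
def step (N : ℕ) (α lam : ℝ) (z y : State N) : ℝ :=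
  ∑' f : Fin N → ℕ,
    if ∀ m, y.1 m = empCount N f m then ∏ n : Fin N, offspringProb N α lam z (f n) else 0

/-! ### Auxiliary lemmas -/

lemma poissonPMF_pos {lam : ℝ} (hlam : 0 < lam) (k : ℕ) : 0 < poissonPMF lam k := by
  unfold poissonPMF
  positivity

lemma summable_poissonPMF (lam : ℝ) : Summable (poissonPMF lam) := by
  have := Real.summable_pow_div_factorial lam
  have h := this.mul_left (Real.exp (-lam))
  refine h.congr fun k => ?_
  simp [poissonPMF, mul_div_assoc]

lemma summable_shift (q : ℕ → ℝ) (hq : Summable q) (i : ℕ) :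
    Summable (fun m => if i ≤ m then q (m - i) else 0) := by
  have hinj : Function.Injective (fun m : ℕ => m + i) := add_left_injective i
  rw [← Function.Injective.summable_iff hinj]
  · have : ((fun m => if i ≤ m then q (m - i) else 0) ∘ fun m : ℕ => m + i) = q := by
      funext m; simp
    rw [this]; exact hq
  · intro x hx
    have hxi : ¬ i ≤ x := by
      intro h
      exact hx ⟨x - i, by simp; omega⟩
    simp [hxi]

lemma summable_pi_prod (h : ℕ → ℝ) (h0 : ∀ m, 0 ≤ h m) (hs : Summable h) (N : ℕ) :
    Summable (fun f : Fin N → ℕ => ∏ n, h (f n)) := by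
  induction N with
  | zero => exact Summable.of_finite
  | succ N ih =>
    have hnn : (0 : (Fin N → ℕ) → ℝ) ≤ fun f => ∏ n, h (f n) :=
      fun f => Finset.prod_nonneg fun n _ => h0 _
    have hh : (0 : ℕ → ℝ) ≤ h := fun m => h0 m
    have hF : Summable (fun p : ℕ × (Fin N → ℕ) => h p.1 * ∏ n, h (p.2 n)) :=
      Summable.mul_of_nonneg (f := h) (g := fun f : Fin N → ℕ => ∏ n, h (f n)) hs ih hh hnn
    rw [← Equiv.summable_iff (Fin.consEquiv (fun _ => ℕ))]
    refine hF.congr fun p => ?_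
    simp [Fin.consEquiv, Fin.prod_univ_succ]

lemma count_get (l : List ℕ) (m : ℕ) :
    ((Finset.univ : Finset (Fin l.length)).filter fun n => l.get n = m).card = l.count m := by
  classical
  have h1 : (Multiset.map (fun n : Fin l.length => l.get n) Finset.univ.val) = (l : Multiset ℕ) := by
    rw [Fin.univ_def]
    show Multiset.map _ (List.finRange l.length : Multiset (Fin l.length)) = _
    rw [Multiset.map_coe, List.map_get_finRange]
  have h2 := Multiset.count_map (fun n : Fin l.length => l.get n) Finset.univ.val m
  rw [h1, Multiset.coe_count] at h2
  have h3 : ((Finset.univ : Finset (Fin l.length)).filter fun n => l.get n = m).card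
      = Multiset.card (Multiset.filter (fun a => m = l.get a) Finset.univ.val) := by
    rw [Finset.card, Finset.filter_val]
    congr 1
    exact Multiset.filter_congr (fun x _ => eq_comm)
  rw [h3, ← h2]

lemma parentProb_nonneg (N : ℕ) (α : ℝ) (hα1 : α ≤ 1) (z : State N) (i : ℕ) :
    0 ≤ parentProb N α z i := by
  have h1 : (0:ℝ) ≤ 1 - α := by linarith
  have hW : 0 ≤ totalWeight N α z := by
    apply Finset.sum_nonneg
    intro i _
    positivity
  unfold parentProb
  positivity

lemma totalWeight_le (N : ℕ) (α : ℝ) (hα0 : 0 < α) (hα1 : α < 1) (z : State N) :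
    totalWeight N α z ≤ N := by
  have h1 : (0:ℝ) ≤ 1 - α := by linarith
  have h2 : (1:ℝ) - α ≤ 1 := by linarith
  have hle : totalWeight N α z ≤ z.1.sum fun _ n => (n : ℝ) := by
    apply Finset.sum_le_sum
    intro i _
    calc (z.1 i : ℝ) * (1 - α) ^ i ≤ (z.1 i : ℝ) * 1 := by
          apply mul_le_mul_of_nonneg_left (pow_le_one₀ h1 h2) (by positivity)
      _ = (z.1 i : ℝ) := mul_one _
  refine hle.trans ?_
  have : (z.1.sum fun _ n => (n : ℝ)) = ((z.1.sum fun _ n => n : ℕ) : ℝ) := by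
    rw [Finsupp.sum, Finsupp.sum, Nat.cast_sum]
  rw [this, z.2]

lemma one_le_totalWeight (N : ℕ) (α : ℝ) (hα0 : 0 < α) (hα1 : α < 1) (z : State N)
    (hz : 1 ≤ z.1 0) : 1 ≤ totalWeight N α z := by
  have h1 : (0:ℝ) ≤ 1 - α := by linarith
  have hmem : 0 ∈ z.1.support := Finsupp.mem_support_iff.2 (by omega)
  have hterm : (1:ℝ) ≤ (z.1 0 : ℝ) * (1 - α) ^ 0 := by
    simp only [pow_zero, mul_one]
    exact_mod_cast hz
  refine hterm.trans ?_
  exact Finset.single_le_sum (f := fun i => (z.1 i : ℝ) * (1 - α) ^ i)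
    (fun i _ => by positivity) hmem

lemma parentProb_zero_ge (N : ℕ) (hN : 1 ≤ N) (α : ℝ) (hα0 : 0 < α) (hα1 : α < 1)
    (z : State N) (hz : 1 ≤ z.1 0) : 1 / N ≤ parentProb N α z 0 := by
  have hW1 : 1 ≤ totalWeight N α z := one_le_totalWeight N α hα0 hα1 z hz
  have hWpos : 0 < totalWeight N α z := by linarith
  have hWN : totalWeight N α z ≤ N := totalWeight_le N α hα0 hα1 z
  unfold parentProb
  simp only [pow_zero, mul_one]
  calc (1:ℝ) / N ≤ 1 / totalWeight N α z := by
        apply one_div_le_one_div_of_le hWpos hWN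
    _ ≤ (z.1 0 : ℝ) / totalWeight N α z := by
        gcongr
        exact_mod_cast hz


lemma offspringProb_nonneg (N : ℕ) (α lam : ℝ) (hα1 : α ≤ 1) (hlam : 0 < lam)
    (z : State N) (m : ℕ) : 0 ≤ offspringProb N α lam z m := by
  apply Finset.sum_nonneg
  intro i _
  exact mul_nonneg (parentProb_nonneg N α hα1 z i) (poissonPMF_pos hlam _).le

lemma offspringProb_ge (N : ℕ) (hN : 1 ≤ N) (α lam : ℝ) (hα0 : 0 < α) (hα1 : α < 1)
    (hlam : 0 < lam) (z : State N) (hz : 1 ≤ z.1 0) (m : ℕ) :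
    1 / N * poissonPMF lam m ≤ offspringProb N α lam z m := by
  have h0 : (0:ℕ) ∈ Finset.range (m + 1) := Finset.mem_range.2 (Nat.succ_pos m)
  have hterm : parentProb N α z 0 * poissonPMF lam (m - 0)
      ≤ offspringProb N α lam z m :=
    Finset.single_le_sum (f := fun i => parentProb N α z i * poissonPMF lam (m - i))
      (fun i _ => mul_nonneg (parentProb_nonneg N α hα1.le z i) (poissonPMF_pos hlam _).le) h0
  refine le_trans ?_ hterm
  simp only [Nat.sub_zero]
  exact mul_le_mul_of_nonneg_right (parentProb_zero_ge N hN α hα0 hα1 z hz)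
    (poissonPMF_pos hlam m).le

lemma summable_offspringProb (N : ℕ) (α lam : ℝ) (z : State N) :
    Summable (offspringProb N α lam z) := by
  classical
  have key : ∀ m, offspringProb N α lam z m
      = ∑ i ∈ z.1.support, (if i ≤ m then parentProb N α z i * poissonPMF lam (m - i) else 0) := by
    intro m
    have h1 : offspringProb N α lam z m
        = ∑ i ∈ Finset.range (m + 1),
            (if i ≤ m then parentProb N α z i * poissonPMF lam (m - i) else 0) := by
      apply Finset.sum_congr rfl
      intro i hi
      rw [if_pos (Nat.lt_succ_iff.mp (Finset.mem_range.mp hi))]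
    have h2 : ∑ i ∈ Finset.range (m + 1),
          (if i ≤ m then parentProb N α z i * poissonPMF lam (m - i) else 0)
        = ∑ i ∈ Finset.range (m + 1) ∪ z.1.support,
            (if i ≤ m then parentProb N α z i * poissonPMF lam (m - i) else 0) := by
      apply Finset.sum_subset Finset.subset_union_left
      intro x _ hx
      rw [if_neg]
      intro hxm
      exact hx (Finset.mem_range.2 (Nat.lt_succ_of_le hxm))
    have h3 : ∑ i ∈ z.1.support,
          (if i ≤ m then parentProb N α z i * poissonPMF lam (m - i) else 0)
        = ∑ i ∈ Finset.range (m + 1) ∪ z.1.support,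
            (if i ≤ m then parentProb N α z i * poissonPMF lam (m - i) else 0) := by
      apply Finset.sum_subset Finset.subset_union_right
      intro x _ hx
      have hz0 : z.1 x = 0 := Finsupp.notMem_support_iff.mp hx
      have hp : parentProb N α z x = 0 := by simp [parentProb, hz0]
      simp [hp]
    rw [h1, h2, ← h3]
  have : Summable (fun m => ∑ i ∈ z.1.support,
      (if i ≤ m then parentProb N α z i * poissonPMF lam (m - i) else 0)) := by
    apply summable_sum
    intro i _
    have hsh := (summable_shift (poissonPMF lam) (summable_poissonPMF lam) i).mul_left
      (parentProb N α z i)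
    refine hsh.congr fun m => ?_
    by_cases h : i ≤ m <;> simp [h]
  exact this.congr fun m => (key m).symm

/-- for every target state `z ∈ M_1^{(0),N}(Z_+)` (i.e. `z(0) ≥ 1/N`),
the one-step transition probability into `z` is bounded below, uniformly over all
initial states `z₀ ∈ M_1^{(0),N}(Z_+)`. -/
theorem statement0 (N : ℕ) (hN : 1 ≤ N) (α lam : ℝ)
    (hα0 : 0 < α) (hα1 : α < 1) (hlam : 0 < lam)
    (z : State N) (hz : 1 ≤ z.1 0) :
    ∃ c : ℝ, 0 < c ∧ ∀ z₀ : State N, 1 ≤ z₀.1 0 → c ≤ step N α lam z₀ z := by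
  classical
  -- construct a representative assignment `f₀` of the target state `z`
  set l : List ℕ := z.1.toMultiset.toList with hl
  have hlen : l.length = N := by
    rw [hl, Multiset.length_toList, Finsupp.card_toMultiset]; exact z.2
  set f₀ : Fin N → ℕ := fun n => l.get (Fin.cast hlen.symm n) with hf₀
  have hcount : ∀ m, empCount N f₀ m = z.1 m := by
    intro m
    have hbij : empCount N f₀ m
        = ((Finset.univ : Finset (Fin l.length)).filter fun n => l.get n = m).card := by
      unfold empCount
      apply Finset.card_bij' (fun n _ => Fin.cast hlen.symm n) (fun n _ => Fin.cast hlen n)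
      · intro a ha
        simp only [Finset.mem_filter, Finset.mem_univ, true_and]
        simpa [hf₀] using (Finset.mem_filter.mp ha).2
      · intro a ha
        simp only [Finset.mem_filter, Finset.mem_univ, true_and]
        have := (Finset.mem_filter.mp ha).2
        simp [hf₀]
        convert this using 2
        rfl
      · intro a _; rfl
      · intro a _; rfl
    rw [hbij, count_get]
    rw [hl, ← Multiset.coe_count, Multiset.coe_toList, Finsupp.count_toMultiset]
  set c : ℝ := ∏ n : Fin N, (1 / N * poissonPMF lam (f₀ n)) with hc
  have hNpos : (0:ℝ) < N := by exact_mod_cast hN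
  have hcpos : 0 < c := by
    apply Finset.prod_pos
    intro n _
    exact mul_pos (by positivity) (poissonPMF_pos hlam _)
  refine ⟨c, hcpos, ?_⟩
  intro z₀ hz₀
  -- summability of the product law over all assignments
  have hoff0 : ∀ m, 0 ≤ offspringProb N α lam z₀ m :=
    offspringProb_nonneg N α lam hα1.le hlam z₀
  have hg : Summable (fun f : Fin N → ℕ => ∏ n, offspringProb N α lam z₀ (f n)) :=
    summable_pi_prod _ hoff0 (summable_offspringProb N α lam z₀) N
  set t : (Fin N → ℕ) → ℝ := fun f =>
    if ∀ m, z.1 m = empCount N f m then ∏ n : Fin N, offspringProb N α lam z₀ (f n) else 0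
    with ht_def
  have ht0 : ∀ f, 0 ≤ t f := by
    intro f
    simp only [ht_def]
    split
    · exact Finset.prod_nonneg fun n _ => hoff0 _
    · exact le_rfl
  have htle : ∀ f, t f ≤ ∏ n, offspringProb N α lam z₀ (f n) := by
    intro f
    simp only [ht_def]
    split
    · exact le_rfl
    · exact Finset.prod_nonneg fun n _ => hoff0 _
  have ht : Summable t := Summable.of_nonneg_of_le ht0 htle hg
  have hstep : step N α lam z₀ z = ∑' f, t f := rfl
  have hle : t f₀ ≤ ∑' f, t f := Summable.le_tsum ht f₀ (fun f _ => ht0 f)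
  have htf₀ : t f₀ = ∏ n, offspringProb N α lam z₀ (f₀ n) := by
    simp only [ht_def]
    exact if_pos (fun m => (hcount m).symm)
  have hcle : c ≤ ∏ n, offspringProb N α lam z₀ (f₀ n) := by
    rw [hc]
    apply Finset.prod_le_prod
    · intro n _
      exact mul_nonneg (by positivity) (poissonPMF_pos hlam _).le
    · intro n _
      exact offspringProb_ge N hN α lam hα0 hα1 hlam z₀ hz₀ (f₀ n)
  rw [hstep]
  calc c ≤ ∏ n, offspringProb N α lam z₀ (f₀ n) := hcle
    _ = t f₀ := htf₀.symm
    _ ≤ ∑' f, t f := hle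

end MullerRatchet
end
end

section
/- Let d ≥ 1 and k ≥ 1 be integers, α > 0, λ > 0, and let x = (x_0, …, x_d) satisfy x_i ≥ 0 and Σ_{i=0}^d x_i = 1. Define M_j := Σ_{i=0}^d i^j x_i. Then V_k := α ( M_1 · M_k − M_{k+1} ) + λ Σ_{ℓ=0}^{d−1} (ℓ+1)^k x_ℓ − λ ( M_k − d^k x_d ) ≤ λ (2^k − 1) M_k + λ. -/
open scoped BigOperators

/-- Weighted Chebyshev step: `M_1 M_k ≤ M_{k+1}` on the simplex. -/
lemma holder_step (d k : ℕ) (x : ℕ → ℝ) (hx : ∀ i, 0 ≤ x i)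
    (hsum : ∑ i ∈ Finset.range (d + 1), x i = 1) :
    (∑ i ∈ Finset.range (d + 1), (i : ℝ) * x i) *
      (∑ i ∈ Finset.range (d + 1), (i : ℝ) ^ k * x i) ≤
    ∑ i ∈ Finset.range (d + 1), (i : ℝ) ^ (k + 1) * x i := by
  set s := Finset.range (d + 1)
  have key : 0 ≤ ∑ i ∈ s, ∑ j ∈ s,
      x i * x j * (((i : ℝ) - j) * ((i : ℝ) ^ k - (j : ℝ) ^ k)) := by
    refine Finset.sum_nonneg fun i _ => Finset.sum_nonneg fun j _ => ?_
    apply mul_nonneg (mul_nonneg (hx i) (hx j))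
    rcases le_total (j : ℝ) (i : ℝ) with h | h
    · have := pow_le_pow_left₀ (j.cast_nonneg) h k
      exact mul_nonneg (by linarith) (by linarith)
    · have := pow_le_pow_left₀ (i.cast_nonneg) h k
      nlinarith
  have expand :
      (∑ i ∈ s, (i : ℝ) ^ (k + 1) * x i) * (∑ j ∈ s, x j)
        - (∑ i ∈ s, (i : ℝ) * x i) * (∑ j ∈ s, (j : ℝ) ^ k * x j)
        - (∑ i ∈ s, (i : ℝ) ^ k * x i) * (∑ j ∈ s, (j : ℝ) * x j)
        + (∑ i ∈ s, x i) * (∑ j ∈ s, (j : ℝ) ^ (k + 1) * x j)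
      = ∑ i ∈ s, ∑ j ∈ s,
          x i * x j * (((i : ℝ) - j) * ((i : ℝ) ^ k - (j : ℝ) ^ k)) := by
    rw [Finset.sum_mul_sum, Finset.sum_mul_sum, Finset.sum_mul_sum, Finset.sum_mul_sum,
      ← Finset.sum_sub_distrib, ← Finset.sum_sub_distrib, ← Finset.sum_add_distrib]
    refine Finset.sum_congr rfl fun i _ => ?_
    rw [← Finset.sum_sub_distrib, ← Finset.sum_sub_distrib, ← Finset.sum_add_distrib]
    exact Finset.sum_congr rfl fun j _ => by ring
  rw [hsum] at expand
  linarith [expand ▸ key]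

/-- drift bound `V_k ≤ λ (2^k - 1) M_k + λ` for the `k`-th moment of the
finite-dimensional Muller-ratchet diffusion, where `x` is a point of the
`d`-dimensional simplex and `M_j = Σ_{i=0}^d i^j x_i`. -/
theorem statement12 (d k : ℕ) (hd : 1 ≤ d) (hk : 1 ≤ k)
    (α lam : ℝ) (hα : 0 < α) (hlam : 0 < lam)
    (x : ℕ → ℝ) (hx : ∀ i, 0 ≤ x i)
    (hsum : ∑ i ∈ Finset.range (d + 1), x i = 1) :
    α * ((∑ i ∈ Finset.range (d + 1), (i : ℝ) ^ (1 : ℕ) * x i) *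
            (∑ i ∈ Finset.range (d + 1), (i : ℝ) ^ k * x i) -
          ∑ i ∈ Finset.range (d + 1), (i : ℝ) ^ (k + 1) * x i) +
        lam * (∑ l ∈ Finset.range d, ((l : ℝ) + 1) ^ k * x l) -
        lam * ((∑ i ∈ Finset.range (d + 1), (i : ℝ) ^ k * x i) - (d : ℝ) ^ k * x d)
      ≤ lam * (2 ^ k - 1) * (∑ i ∈ Finset.range (d + 1), (i : ℝ) ^ k * x i) + lam := by
  have h1 : (∑ i ∈ Finset.range (d + 1), (i : ℝ) ^ (1 : ℕ) * x i) =
      ∑ i ∈ Finset.range (d + 1), (i : ℝ) * x i := by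
    simp
  rw [h1]
  set Mk := ∑ i ∈ Finset.range (d + 1), (i : ℝ) ^ k * x i with hMk
  -- selection term is nonpositive
  have hsel : α * ((∑ i ∈ Finset.range (d + 1), (i : ℝ) * x i) * Mk -
      ∑ i ∈ Finset.range (d + 1), (i : ℝ) ^ (k + 1) * x i) ≤ 0 := by
    have := holder_step d k x hx hsum
    exact mul_nonpos_of_nonneg_of_nonpos hα.le (by linarith)
  -- mutation term bound: A + d^k x_d ≤ 2^k M_k + 1
  have hx0 : x 0 ≤ 1 := by
    rw [← hsum]
    exact Finset.single_le_sum (fun i _ => hx i) (Finset.mem_range.mpr (by omega))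
  have hA : (∑ l ∈ Finset.range d, ((l : ℝ) + 1) ^ k * x l) + (d : ℝ) ^ k * x d
      ≤ 2 ^ k * Mk + 1 := by
    have step1 : ∀ l ∈ Finset.range d, ((l : ℝ) + 1) ^ k * x l ≤
        2 ^ k * (l : ℝ) ^ k * x l + (if l = 0 then x 0 else 0) := by
      intro l _
      rcases Nat.eq_zero_or_pos l with rfl | hl
      · simp [zero_pow (by omega : k ≠ 0)]
      · have h1l : (1 : ℝ) ≤ l := by exact_mod_cast hl
        have : ((l : ℝ) + 1) ^ k ≤ (2 * l) ^ k :=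
          pow_le_pow_left₀ (by positivity) (by linarith) k
        rw [mul_pow] at this
        simp only [if_neg hl.ne']
        have := mul_le_mul_of_nonneg_right this (hx l)
        linarith
    have step2 : (∑ l ∈ Finset.range d, ((l : ℝ) + 1) ^ k * x l) ≤
        (∑ l ∈ Finset.range d, 2 ^ k * (l : ℝ) ^ k * x l) + x 0 := by
      calc (∑ l ∈ Finset.range d, ((l : ℝ) + 1) ^ k * x l)
          ≤ ∑ l ∈ Finset.range d, (2 ^ k * (l : ℝ) ^ k * x l + if l = 0 then x 0 else 0) :=
            Finset.sum_le_sum step1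
        _ = (∑ l ∈ Finset.range d, 2 ^ k * (l : ℝ) ^ k * x l) + x 0 := by
            rw [Finset.sum_add_distrib, Finset.sum_ite_eq' (Finset.range d) 0 (fun _ => x 0)]
            rw [if_pos (Finset.mem_range.mpr (by omega))]
    have stepd : (d : ℝ) ^ k * x d ≤ 2 ^ k * (d : ℝ) ^ k * x d := by
      have h2 : (1 : ℝ) ≤ 2 ^ k := one_le_pow₀ (by norm_num)
      nlinarith [mul_nonneg (pow_nonneg (Nat.cast_nonneg d : (0:ℝ) ≤ d) k) (hx d)]
    have hsplit : 2 ^ k * Mk = (∑ l ∈ Finset.range d, 2 ^ k * (l : ℝ) ^ k * x l)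
        + 2 ^ k * (d : ℝ) ^ k * x d := by
      rw [hMk, Finset.sum_range_succ, mul_add, Finset.mul_sum]
      simp [mul_assoc]
    linarith
  have hMknn : 0 ≤ Mk :=
    Finset.sum_nonneg fun i _ => mul_nonneg (by positivity) (hx i)
  nlinarith [hA, hsel, hlam.le]
end
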